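/- Let H be a 2-connected graph, let e = uv be an edge of H, and let H⁻ = H − e. For every k ≥ 1, the graph P_k(H⁻) obtained from k pairwise disjoint copies H⁻_1, ..., H⁻_k of H⁻ by identifying, for each 1 ≤ i ≤ k−1, the copy of v in H⁻_i with the copy of u in H⁻_{i+1}, is H-minor-free. -/

import Mathlib

open SimpleGraph

variable {α β : Type*}

/-- A model of `H` in `G`: a family of pairwise disjoint nonempty vertex subsets of `G`,
each inducing a connected subgraph, such that for every edge `h h'` of `H` there is an
edge of `G` between `V h` and `V h'`. -/
def IsMinorModel (G : SimpleGraph α) (H : SimpleGraph β) (V : β → Set α) : Prop :=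
  (∀ h, (V h).Nonempty) ∧
  (Pairwise fun h h' => Disjoint (V h) (V h')) ∧
  (∀ h, (G.induce (V h)).Connected) ∧
  ∀ h h', H.Adj h h' → ∃ x ∈ V h, ∃ y ∈ V h', G.Adj x y

/-- `H` is a minor of `G`. -/
def HasMinor (G : SimpleGraph α) (H : SimpleGraph β) : Prop :=
  ∃ V : β → Set α, IsMinorModel G H V

/-- `G` is `H`-minimal: `H` is a minor of `G`, but for every vertex `x` of `G`,
`H` is not a minor of `G − x`. -/
def MinorMinimal (G : SimpleGraph α) (H : SimpleGraph β) : Prop :=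
  HasMinor G H ∧ ∀ x : α, ¬ HasMinor (G.induce {y | y ≠ x}) H

/-- A graph is 2-connected if it has at least 3 vertices, is connected, and stays
connected after deleting any single vertex. -/
def TwoConnected [Fintype α] (G : SimpleGraph α) : Prop :=
  3 ≤ Fintype.card α ∧ G.Connected ∧ ∀ v : α, (G.induce {w | w ≠ v}).Connected

/-- `G` is a cycle: connected and 2-regular. -/
def IsCycleGraph (G : SimpleGraph α) : Prop :=
  G.Connected ∧ ∀ v : α, (G.neighborSet v).ncard = 2

/-- The graph `P_k(H⁻)` obtained from `k` disjoint copies of `H⁻ = H − uv` by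
identifying, for each `0 ≤ i < k - 1`, the copy of `v` in the `i`-th copy with the
copy of `u` in the `(i+1)`-st copy.  A vertex `Sum.inl (i, a)` (with `a ≠ v`) is the
vertex `a` of the `i`-th copy (so `Sum.inl (i+1, u)` is also the vertex `v` of the
`i`-th copy), and `Sum.inr ()` is the vertex `v` of the last copy. -/
def pathOfCopies (H : SimpleGraph α) (u v : α) (k : ℕ) :
    SimpleGraph ((Fin k × {a : α // a ≠ v}) ⊕ Unit) :=
  SimpleGraph.fromRel fun x y =>
    match x, y with
    | Sum.inl (i, a), Sum.inl (j, b) =>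
        (i = j ∧ (H.deleteEdges {s(u, v)}).Adj (a : α) (b : α)) ∨
        ((j : ℕ) = (i : ℕ) + 1 ∧ (b : α) = u ∧ (H.deleteEdges {s(u, v)}).Adj (a : α) v)
    | Sum.inl (i, a), Sum.inr _ =>
        (i : ℕ) = k - 1 ∧ (H.deleteEdges {s(u, v)}).Adj (a : α) v
    | Sum.inr _, _ => False

open SimpleGraph

namespace PoCAux

open scoped Classical

variable {α : Type*} {v : α} {k : ℕ}

noncomputable def pos (u : α) : (Fin k × {a : α // a ≠ v}) ⊕ Unit → ℕ
  | Sum.inl (j, a) => if (a : α) = u then 2 * (j : ℕ) else 2 * (j : ℕ) + 1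
  | Sum.inr _ => 2 * k

@[simp] lemma pos_inl (u : α) (j : Fin k) (a : {a : α // a ≠ v}) :
    pos u (Sum.inl (j, a)) = if (a : α) = u then 2 * (j : ℕ) else 2 * (j : ℕ) + 1 := rfl

@[simp] lemma pos_inr (u : α) (t : Unit) :
    pos u (Sum.inr t : (Fin k × {a : α // a ≠ v}) ⊕ Unit) = 2 * k := rfl

lemma pos_le (u : α) (x : (Fin k × {a : α // a ≠ v}) ⊕ Unit) : pos u x ≤ 2 * k := by
  rcases x with ⟨j, a⟩ | t
  · have := j.isLt
    simp only [pos_inl]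
    split_ifs <;> omega
  · simp

variable {H : SimpleGraph α} {u : α}

lemma not_adj_del : ¬ (H.deleteEdges {s(u, v)}).Adj u v := by
  simp [deleteEdges_adj]

lemma adj_inl_inl {i j : Fin k} {a b : {a : α // a ≠ v}}
    (h : (pathOfCopies H u v k).Adj (Sum.inl (i, a)) (Sum.inl (j, b))) :
    (i = j ∧ (H.deleteEdges {s(u, v)}).Adj (a : α) (b : α)) ∨
    ((j : ℕ) = (i : ℕ) + 1 ∧ (b : α) = u ∧ (H.deleteEdges {s(u, v)}).Adj (a : α) v) ∨
    ((i : ℕ) = (j : ℕ) + 1 ∧ (a : α) = u ∧ (H.deleteEdges {s(u, v)}).Adj (b : α) v) := by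
  rw [pathOfCopies, fromRel_adj] at h
  rcases h.2 with (⟨h1, h2⟩ | ⟨h1, h2, h3⟩) | (⟨h1, h2⟩ | ⟨h1, h2, h3⟩)
  · exact Or.inl ⟨h1, h2⟩
  · exact Or.inr (Or.inl ⟨h1, h2, h3⟩)
  · exact Or.inl ⟨h1.symm, h2.symm⟩
  · exact Or.inr (Or.inr ⟨h1, h2, h3⟩)

lemma adj_inl_inr {i : Fin k} {a : {a : α // a ≠ v}} {t : Unit}
    (h : (pathOfCopies H u v k).Adj (Sum.inl (i, a)) (Sum.inr t)) :
    (i : ℕ) = k - 1 ∧ (H.deleteEdges {s(u, v)}).Adj (a : α) v := by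
  rw [pathOfCopies, fromRel_adj] at h
  rcases h.2 with h' | h'
  · exact h'
  · exact h'.elim

lemma not_adj_inr_inr {s t : Unit} :
    ¬ (pathOfCopies H u v k).Adj (Sum.inr s) (Sum.inr t) := by
  intro h
  rw [pathOfCopies, fromRel_adj] at h
  rcases h.2 with h' | h' <;> exact h'

lemma adj_pos (hk : 1 ≤ k) {x y : (Fin k × {a : α // a ≠ v}) ⊕ Unit}
    (hxy : (pathOfCopies H u v k).Adj x y) :
    pos u y ≤ pos u x + 1 ∧ pos u x ≤ pos u y + 1 := by
  rcases x with ⟨i, a⟩ | s <;> rcases y with ⟨j, b⟩ | t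
  · rcases adj_inl_inl hxy with ⟨h1, h2⟩ | ⟨h1, h2, h3⟩ | ⟨h1, h2, h3⟩
    · subst h1
      simp only [pos_inl]
      split_ifs <;> omega
    · have hau : (a : α) ≠ u := fun hau => not_adj_del (hau ▸ h3)
      simp only [pos_inl, if_pos h2, if_neg hau]
      omega
    · have hbu : (b : α) ≠ u := fun hbu => not_adj_del (hbu ▸ h3)
      simp only [pos_inl, if_pos h2, if_neg hbu]
      omega
  · obtain ⟨h1, h2⟩ := adj_inl_inr hxy
    have hau : (a : α) ≠ u := fun hau => not_adj_del (hau ▸ h2)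
    have := i.isLt
    simp only [pos_inl, pos_inr, if_neg hau]
    omega
  · obtain ⟨h1, h2⟩ := adj_inl_inr hxy.symm
    have hbu : (b : α) ≠ u := fun hbu => not_adj_del (hbu ▸ h2)
    have := j.isLt
    simp only [pos_inl, pos_inr, if_neg hbu]
    omega
  · exact absurd hxy not_adj_inr_inr

lemma pos_eq_even (hune : u ≠ v) {m : ℕ} (hm : m < k)
    {x : (Fin k × {a : α // a ≠ v}) ⊕ Unit} (hx : pos u x = 2 * m) :
    x = Sum.inl (⟨m, hm⟩, ⟨u, hune⟩) := by
  rcases x with ⟨j, a⟩ | t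
  · simp only [pos_inl] at hx
    split_ifs at hx with hau
    · have : (j : ℕ) = m := by omega
      congr 1
      ext
      · exact this
      · exact hau
    · omega
  · simp only [pos_inr] at hx
    omega

lemma pos_eq_top (hk : 1 ≤ k) {x : (Fin k × {a : α // a ≠ v}) ⊕ Unit}
    (hx : pos u x = 2 * k) : x = Sum.inr () := by
  rcases x with ⟨j, a⟩ | t
  · have := j.isLt
    simp only [pos_inl] at hx
    split_ifs at hx <;> omega
  · rfl

lemma walk_ivt {γ : Type*} {Γ : SimpleGraph γ} (f : γ → ℕ)
    (hf : ∀ a b, Γ.Adj a b → f b ≤ f a + 1) {x y : γ} (W : Γ.Walk x y) {m : ℕ}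
    (hx : f x ≤ m) (hy : m ≤ f y) : ∃ z ∈ W.support, f z = m := by
  induction W with
  | nil => exact ⟨_, by simp, le_antisymm hx hy⟩
  | @cons p q r h W ih =>
    by_cases hpm : f p = m
    · exact ⟨p, by simp, hpm⟩
    · have h1 : f q ≤ m := le_trans (hf _ _ h) (by omega)
      obtain ⟨z, hz, hzm⟩ := ih h1 hy
      exact ⟨z, by simp [hz], hzm⟩

lemma induce_ivt {γ : Type*} {Γ : SimpleGraph γ} (f : γ → ℕ)
    (hf : ∀ a b, Γ.Adj a b → f b ≤ f a + 1) {S : Set γ}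
    (hconn : (Γ.induce S).Connected) {x y : γ} (hx : x ∈ S) (hy : y ∈ S) {m : ℕ}
    (h1 : f x ≤ m) (h2 : m ≤ f y) : ∃ z ∈ S, f z = m := by
  obtain ⟨W⟩ := hconn.preconnected ⟨x, hx⟩ ⟨y, hy⟩
  obtain ⟨z, _, hzm⟩ := walk_ivt (fun s : S => f ↑s)
    (fun a b hab => hf _ _ ((comap_adj).mp hab)) W h1 h2
  exact ⟨↑z, z.2, hzm⟩

lemma walk_prop {γ : Type*} {Γ : SimpleGraph γ} {P : γ → Prop}
    (hP : ∀ a b, Γ.Adj a b → P a → P b) {x y : γ} (W : Γ.Walk x y) (hx : P x) : P y := by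
  induction W with
  | nil => exact hx
  | cons h W ih => exact ih (hP _ _ h hx)

end PoCAux
/-- For a 2-connected graph `H` with an edge `uv`, the path of `k ≥ 1` copies of
`H⁻ = H − uv` is `H`-minor-free. -/
theorem pathOfCopies_hMinorFree (H : SimpleGraph α) [Fintype α]
    (h2 : TwoConnected H) (u v : α) (huv : H.Adj u v) (k : ℕ) (hk : 1 ≤ k) :
    ¬ HasMinor (pathOfCopies H u v k) H := by
  classical
  rintro ⟨V, hne, hdisj, hconn, hedge⟩
  have hune : u ≠ v := huv.ne
  set G := pathOfCopies H u v k with hG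
  set p : (Fin k × {a : α // a ≠ v}) ⊕ Unit → ℕ := PoCAux.pos u with hp
  have hpos : ∀ y, PoCAux.pos u y = p y := fun _ => rfl
  have hpinl : ∀ (j : Fin k) (b : {a : α // a ≠ v}),
      p (Sum.inl (j, b)) = if (b : α) = u then 2 * (j : ℕ) else 2 * (j : ℕ) + 1 :=
    fun _ _ => rfl
  have hpinr : ∀ t : Unit, p (Sum.inr t) = 2 * k := fun _ => rfl
  have hstep : ∀ a b, G.Adj a b → p b ≤ p a + 1 :=
    fun a b hab => (PoCAux.adj_pos hk hab).1
  have hple : ∀ x, p x ≤ 2 * k := fun x => PoCAux.pos_le u x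
  -- dichotomy at each cut
  have dicho : ∀ j, j < k →
      (∀ h, ∃ x ∈ V h, 2 * j ≤ p x) ∨ (∀ h, ∃ x ∈ V h, p x ≤ 2 * j) := by
    intro j hjk
    by_contra hcon
    push_neg at hcon
    obtain ⟨⟨hL, hLall⟩, ⟨hR, hRall⟩⟩ := hcon
    set c : (Fin k × {a : α // a ≠ v}) ⊕ Unit := Sum.inl (⟨j, hjk⟩, ⟨u, hune⟩) with hc
    have hposc : p c = 2 * j := by rw [hc, hpinl, if_pos rfl]
    have hcuniq : ∀ x, p x = 2 * j → x = c := fun x hx => PoCAux.pos_eq_even hune hjk hx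
    -- side determination for branch sets avoiding c
    have side : ∀ h, c ∉ V h → ∀ y ∈ V h, p y < 2 * j → ∀ x ∈ V h, p x < 2 * j := by
      intro h hcmem y hy hylt x hx
      by_contra hge
      push_neg at hge
      obtain ⟨z, hzV, hz⟩ := PoCAux.induce_ivt p hstep (hconn h) hy hx
        (m := 2 * j) (by omega) hge
      exact hcmem (by rw [← hcuniq z hz]; exact hzV)
    have hLnc : ∀ h, c ∈ V h → h ≠ hL := by
      intro h hh heq
      subst heq
      have := hLall _ hh
      omega
    have hRnc : ∀ h, c ∈ V h → h ≠ hR := by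
      intro h hh heq
      subst heq
      have := hRall _ hh
      omega
    obtain ⟨hc0, hcL, hcR, hconly⟩ :
        ∃ hc0, hc0 ≠ hL ∧ hc0 ≠ hR ∧ ∀ h, c ∈ V h → h = hc0 := by
      by_cases hex : ∃ h, c ∈ V h
      · obtain ⟨hc0, hmem⟩ := hex
        refine ⟨hc0, hLnc _ hmem, hRnc _ hmem, fun h hh => ?_⟩
        by_contra hne'
        exact Set.disjoint_left.mp (hdisj hne') hh hmem
      · push_neg at hex
        obtain ⟨w, hw1, hw2⟩ : ∃ w, w ≠ hL ∧ w ≠ hR := by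
          by_contra hco
          push_neg at hco
          have hsub : (Finset.univ : Finset α) ⊆ {hL, hR} := by
            intro w _
            rcases eq_or_ne w hL with rfl | hwne
            · simp
            · simp [hco w hwne]
          have hcard := Finset.card_le_card hsub
          have h3 := h2.1
          rw [Finset.card_univ] at hcard
          have : ({hL, hR} : Finset α).card ≤ 2 :=
            le_trans (Finset.card_insert_le _ _) (by simp)
          omega
        exact ⟨w, hw1, hw2, fun h hh => absurd hh (hex h)⟩
    -- walk in H minus hc0 from hL to hR
    obtain ⟨W⟩ := (h2.2.2 hc0).preconnected
      (⟨hL, fun h => hcL h.symm⟩ : {w | w ≠ hc0}) ⟨hR, fun h => hcR h.symm⟩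
    have prop : ∀ s t : {w | w ≠ hc0}, (H.induce {w | w ≠ hc0}).Adj s t →
        (∀ x ∈ V (↑s : α), p x < 2 * j) → (∀ x ∈ V (↑t : α), p x < 2 * j) := by
      intro s t hst hQs
      have hadj : H.Adj ↑s ↑t := (comap_adj).mp hst
      obtain ⟨x, hx, y, hy, hxy⟩ := hedge _ _ hadj
      have h1 : p y ≤ p x + 1 := hstep x y hxy
      have hxlt := hQs x hx
      have hcnot : c ∉ V (↑t : α) := fun hcc => t.2 (hconly _ hcc)
      have hylt : p y < 2 * j := by
        have hle : p y ≤ 2 * j := by omega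
        rcases hle.lt_or_eq with h' | h'
        · exact h'
        · exact absurd (by rw [← hcuniq y h']; exact hy) hcnot
      exact side ↑t hcnot y hy hylt
    have QR := PoCAux.walk_prop prop W hLall
    obtain ⟨x0, hx0⟩ := hne hR
    have := hRall x0 hx0
    have := QR x0 hx0
    omega
  -- choose the confining copy index i
  obtain ⟨i, hik, hRi, hLi1⟩ : ∃ i, i < k ∧ (∀ h, ∃ x ∈ V h, 2 * i ≤ p x) ∧
      (∀ h, ∃ x ∈ V h, p x ≤ 2 * (i + 1)) := by
    set Rof : ℕ → Prop := fun j => ∀ h, ∃ x ∈ V h, 2 * j ≤ p x with hRof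
    have hR0 : Rof 0 := fun h => (hne h).elim fun x hx => ⟨x, hx, by omega⟩
    have hfgle : Nat.findGreatest Rof (k - 1) ≤ k - 1 := Nat.findGreatest_le _
    refine ⟨Nat.findGreatest Rof (k - 1), by omega,
      Nat.findGreatest_spec (Nat.zero_le _) hR0, ?_⟩
    by_cases hcase : Nat.findGreatest Rof (k - 1) + 1 < k
    · rcases dicho _ hcase with hr | hl
      · have hgt : ¬ Rof (Nat.findGreatest Rof (k - 1) + 1) :=
          Nat.findGreatest_is_greatest (Nat.lt_succ_self _) (by omega)
        exact absurd hr hgt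
      · exact hl
    · intro h
      obtain ⟨x, hx⟩ := hne h
      refine ⟨x, hx, ?_⟩
      have h1 := hple x
      omega
  -- the confining copy, its endpoints
  set C : Set ((Fin k × {a : α // a ≠ v}) ⊕ Unit) :=
    {x | 2 * i ≤ p x ∧ p x ≤ 2 * i + 2} with hC
  have hival : ((⟨i, hik⟩ : Fin k) : ℕ) = i := rfl
  have hCdef : ∀ x, x ∈ C ↔ (2 * i ≤ p x ∧ p x ≤ 2 * i + 2) := fun x => Iff.rfl
  have meets : ∀ h, ∃ x ∈ V h, 2 * i ≤ p x ∧ p x ≤ 2 * i + 2 := by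
    intro h
    obtain ⟨x1, hx1, hp1⟩ := hRi h
    obtain ⟨x2, hx2, hp2⟩ := hLi1 h
    by_cases hc1 : p x1 ≤ 2 * i + 2
    · exact ⟨x1, hx1, hp1, hc1⟩
    · obtain ⟨z, hz, hzm⟩ := PoCAux.induce_ivt p hstep (hconn h) hx2 hx1
        (m := 2 * i + 2) (by omega) (by omega)
      exact ⟨z, hz, by omega⟩
  set cL : (Fin k × {a : α // a ≠ v}) ⊕ Unit := Sum.inl (⟨i, hik⟩, ⟨u, hune⟩) with hcL
  have hposcL : p cL = 2 * i := by rw [hcL, hpinl, if_pos rfl]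
  have hcLuniq : ∀ x, p x = 2 * i → x = cL := fun x hx => PoCAux.pos_eq_even hune hik hx
  set cR : (Fin k × {a : α // a ≠ v}) ⊕ Unit :=
    if h : i + 1 < k then Sum.inl (⟨i + 1, h⟩, ⟨u, hune⟩) else Sum.inr () with hcR
  have hcRdef1 : ∀ h : i + 1 < k, cR = Sum.inl (⟨i + 1, h⟩, ⟨u, hune⟩) := by
    intro h
    rw [hcR, dif_pos h]
  have hcRdef2 : ¬ i + 1 < k → cR = Sum.inr () := by
    intro h
    rw [hcR, dif_neg h]
  have hposcR : p cR = 2 * i + 2 := by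
    by_cases h : i + 1 < k
    · rw [hcRdef1 h, hpinl, if_pos rfl]
      have hval : ((⟨i + 1, h⟩ : Fin k) : ℕ) = i + 1 := rfl
      omega
    · rw [hcRdef2 h, hpinr]
      omega
  have hcRuniq : ∀ x, p x = 2 * i + 2 → x = cR := by
    intro x hx
    by_cases h : i + 1 < k
    · rw [hcRdef1 h]
      exact PoCAux.pos_eq_even hune h (show PoCAux.pos u x = 2 * (i + 1) by rw [hpos]; omega)
    · rw [hcRdef2 h]
      exact PoCAux.pos_eq_top hk (show PoCAux.pos u x = 2 * k by rw [hpos]; omega)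
  -- barrier lemmas
  have barrL : ∀ h, ∀ x ∈ V h, p x < 2 * i → cL ∈ V h := by
    intro h x hx hlt
    obtain ⟨y, hy, hy1, hy2⟩ := meets h
    obtain ⟨z, hz, hzm⟩ := PoCAux.induce_ivt p hstep (hconn h) hx hy
      (m := 2 * i) (by omega) hy1
    rwa [hcLuniq z hzm] at hz
  have barrR : ∀ h, ∀ x ∈ V h, 2 * i + 2 < p x → cR ∈ V h := by
    intro h x hx hgt
    obtain ⟨y, hy, hy1, hy2⟩ := meets h
    obtain ⟨z, hz, hzm⟩ := PoCAux.induce_ivt p hstep (hconn h) hy hx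
      (m := 2 * i + 2) (by omega) (by omega)
    rwa [hcRuniq z hzm] at hz
  -- the bijection from α onto C
  set e : α → (Fin k × {a : α // a ≠ v}) ⊕ Unit :=
    fun a => if h : a = v then cR else Sum.inl (⟨i, hik⟩, ⟨a, h⟩) with he
  have hecases : ∀ a, ∀ h : a ≠ v, e a = Sum.inl (⟨i, hik⟩, ⟨a, h⟩) := by
    intro a h
    rw [he]
    exact dif_neg h
  have hev : e v = cR := by rw [he]; exact dif_pos rfl
  have heC : ∀ a, e a ∈ C := by
    intro a
    rw [hCdef]
    by_cases h : a = v
    · rw [h, hev, hposcR]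
      omega
    · rw [hecases a h, hpinl, hival]
      split_ifs <;> omega
  have heinj : Function.Injective e := by
    have hne1 : ∀ (b : α) (hb : b ≠ v), cR ≠ Sum.inl (⟨i, hik⟩, ⟨b, hb⟩) := by
      intro b hb hab
      by_cases h : i + 1 < k
      · rw [hcRdef1 h, Sum.inl.injEq, Prod.mk.injEq] at hab
        have hval : i + 1 = i := congrArg Fin.val hab.1
        omega
      · rw [hcRdef2 h] at hab
        cases hab
    intro a b hab
    by_cases ha : a = v <;> by_cases hb : b = v
    · rw [ha, hb]
    · rw [ha, hev, hecases b hb] at hab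
      exact absurd hab (hne1 b hb)
    · rw [hb, hev, hecases a ha] at hab
      exact absurd hab.symm (hne1 a ha)
    · rw [hecases a ha, hecases b hb, Sum.inl.injEq, Prod.mk.injEq] at hab
      exact congrArg Subtype.val hab.2
  have hesurj : ∀ x ∈ C, ∃ a, e a = x := by
    intro x hxC
    rw [hCdef] at hxC
    obtain ⟨hx1, hx2⟩ := hxC
    rcases x with ⟨j, b⟩ | t
    · have hjlt := j.isLt
      rw [hpinl] at hx1 hx2
      by_cases hbu : (b : α) = u
      · rw [if_pos hbu] at hx1 hx2
        rcases (by omega : (j : ℕ) = i ∨ (j : ℕ) = i + 1) with hj | hj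
        · refine ⟨u, ?_⟩
          rw [hecases u hune]
          obtain rfl : (⟨i, hik⟩ : Fin k) = j := Fin.ext (by simp [hj])
          obtain rfl : (⟨u, hune⟩ : {a : α // a ≠ v}) = b := Subtype.ext hbu.symm
          rfl
        · refine ⟨v, ?_⟩
          have hlt : i + 1 < k := hj ▸ j.isLt
          rw [hev, hcRdef1 hlt]
          obtain rfl : (⟨i + 1, hlt⟩ : Fin k) = j := Fin.ext (by simp [hj])
          obtain rfl : (⟨u, hune⟩ : {a : α // a ≠ v}) = b := Subtype.ext hbu.symm
          rfl
      · rw [if_neg hbu] at hx1 hx2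
        have hj : (j : ℕ) = i := by omega
        refine ⟨(b : α), ?_⟩
        rw [hecases (b : α) b.2]
        obtain rfl : (⟨i, hik⟩ : Fin k) = j := Fin.ext (by simp [hj])
        rfl
    · cases t
      rw [hpinr] at hx2
      refine ⟨v, ?_⟩
      rw [hev, hcRdef2 (by omega)]
  -- pigeonhole: each V h meets C in exactly one point
  set CF : Finset ((Fin k × {a : α // a ≠ v}) ⊕ Unit) := Set.toFinset C with hCF
  have hCFcard : CF.card = Fintype.card α := by
    have himg : CF = Finset.univ.image e := by
      ext x
      simp only [hCF, Set.mem_toFinset, Finset.mem_image, Finset.mem_univ, true_and]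
      exact ⟨fun hx => hesurj x hx, fun ⟨a, ha⟩ => ha ▸ heC a⟩
    rw [himg, Finset.card_image_of_injective _ heinj, Finset.card_univ]
  set F : α → Finset ((Fin k × {a : α // a ≠ v}) ⊕ Unit) :=
    fun h => Set.toFinset (V h ∩ C) with hF
  have hFapp : ∀ h x, x ∈ F h ↔ (x ∈ V h ∧ x ∈ C) := by
    intro h x
    rw [hF]
    simp only [Set.mem_toFinset, Set.mem_inter_iff]
  have hFsub : ∀ h, F h ⊆ CF := by
    intro h x hx
    rw [hCF, Set.mem_toFinset]
    exact ((hFapp h x).mp hx).2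
  have hFne : ∀ h, 1 ≤ (F h).card := by
    intro h
    obtain ⟨x, hx, hx2⟩ := meets h
    exact Finset.card_pos.mpr ⟨x, (hFapp h x).mpr ⟨hx, (hCdef x).mpr hx2⟩⟩
  have hsum : ∑ h, (F h).card ≤ CF.card := by
    rw [← Finset.card_biUnion (by
      intro a _ b _ hab
      rw [Function.onFun, Finset.disjoint_left]
      intro x hxa hxb
      exact Set.disjoint_left.mp (hdisj hab) ((hFapp a x).mp hxa).1 ((hFapp b x).mp hxb).1)]
    exact Finset.card_le_card (Finset.biUnion_subset.mpr fun h _ => hFsub h)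
  have hall1 : ∀ h, (F h).card = 1 := by
    by_contra hcon
    push_neg at hcon
    obtain ⟨h0, hh0⟩ := hcon
    have hlt : ∑ _h : α, 1 < ∑ h, (F h).card :=
      Finset.sum_lt_sum (fun h _ => hFne h)
        ⟨h0, Finset.mem_univ _, lt_of_le_of_ne (hFne h0) (Ne.symm hh0)⟩
    rw [Finset.sum_const, Finset.card_univ, smul_eq_mul, mul_one] at hlt
    omega
  have hsingle : ∀ h, ∃ z, ∀ x, (x ∈ V h ∧ x ∈ C) ↔ x = z := by
    intro h
    obtain ⟨z, hz⟩ := Finset.card_eq_one.mp (hall1 h)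
    refine ⟨z, fun x => ?_⟩
    rw [← hFapp h x, hz, Finset.mem_singleton]
  choose ψ hψ using hsingle
  have hψmem : ∀ h, ψ h ∈ V h ∧ ψ h ∈ C := fun h => (hψ h (ψ h)).mpr rfl
  choose φ hφ using fun h => hesurj (ψ h) (hψmem h).2
  have hφinj : Function.Injective φ := by
    intro a b hab
    have hψab : ψ a = ψ b := by rw [← hφ a, ← hφ b, hab]
    by_contra hne'
    exact Set.disjoint_left.mp (hdisj hne') (hψmem a).1 (hψab ▸ (hψmem b).1)
  -- witnesses of edges lie in C
  have hwitC : ∀ h h' x y, h ≠ h' → x ∈ V h → y ∈ V h' → G.Adj x y → x ∈ C := by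
    intro h h' x y hne' hx hy hxy
    by_contra hxC
    rw [hCdef, not_and_or, not_le, not_le] at hxC
    have hd1 : p y ≤ p x + 1 := (PoCAux.adj_pos hk hxy).1
    have hd2 : p x ≤ p y + 1 := (PoCAux.adj_pos hk hxy).2
    rcases hxC with hlt | hgt
    · have hcLh : cL ∈ V h := barrL h x hx hlt
      have hy2 : p y ≤ 2 * i := by omega
      rcases hy2.lt_or_eq with h' | h'
      · exact Set.disjoint_left.mp (hdisj hne') hcLh (barrL _ y hy h')
      · exact Set.disjoint_left.mp (hdisj hne') hcLh (hcLuniq y h' ▸ hy)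
    · have hcRh : cR ∈ V h := barrR h x hx hgt
      have hy2 : 2 * i + 2 ≤ p y := by omega
      rcases hy2.lt_or_eq with h' | h'
      · exact Set.disjoint_left.mp (hdisj hne') hcRh (barrR _ y hy h')
      · exact Set.disjoint_left.mp (hdisj hne') hcRh (hcRuniq y h'.symm ▸ hy)
  -- adjacency transfer from C to H⁻
  have htrans : ∀ a b : α, G.Adj (e a) (e b) → (H.deleteEdges {s(u, v)}).Adj a b := by
    have haux : ∀ b : α, ∀ hb : b ≠ v, G.Adj cR (e b) →
        (H.deleteEdges {s(u, v)}).Adj v b := by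
      intro b hb hab
      rw [hecases b hb] at hab
      by_cases h : i + 1 < k
      · rw [hcRdef1 h] at hab
        rcases PoCAux.adj_inl_inl hab with ⟨h1, _⟩ | ⟨h1, _, _⟩ | ⟨_, _, h3⟩
        · have hval : i + 1 = i := congrArg Fin.val h1
          omega
        · have hval : i = i + 1 + 1 := h1
          omega
        · exact h3.symm
      · rw [hcRdef2 h] at hab
        exact ((PoCAux.adj_inl_inr hab.symm).2).symm
    intro a b hab
    by_cases ha : a = v <;> by_cases hb : b = v
    · rw [ha, hb] at hab ⊢
      exact absurd rfl hab.ne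
    · rw [ha] at hab ⊢
      rw [hev] at hab
      exact haux b hb hab
    · rw [hb] at hab ⊢
      rw [hev] at hab
      exact (haux a ha hab.symm).symm
    · rw [hecases a ha, hecases b hb] at hab
      rcases PoCAux.adj_inl_inl hab with ⟨_, h2⟩ | ⟨h1, _, _⟩ | ⟨h1, _, _⟩
      · exact h2
      · have hval : i = i + 1 := h1
        omega
      · have hval : i = i + 1 := h1
        omega
  -- build the injective edge-preserving map
  have hHD : ∀ h h', H.Adj h h' → (H.deleteEdges {s(u, v)}).Adj (φ h) (φ h') := by
    intro h h' hadj
    obtain ⟨x, hx, y, hy, hxy⟩ := hedge h h' hadj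
    have hxC := hwitC h h' x y hadj.ne hx hy hxy
    have hyC := hwitC h' h y x hadj.ne' hy hx hxy.symm
    have hxψ : x = ψ h := (hψ h x).mp ⟨hx, hxC⟩
    have hyψ : y = ψ h' := (hψ h' y).mp ⟨hy, hyC⟩
    rw [hxψ, hyψ, ← hφ h, ← hφ h'] at hxy
    exact htrans _ _ hxy
  -- edge counting contradiction
  have hfin : (H.edgeSet).Finite := Set.toFinite _
  have hDfin : ((H.deleteEdges {s(u, v)}).edgeSet).Finite := Set.toFinite _
  have hDle : (H.deleteEdges {s(u, v)}) ≤ H := deleteEdges_le _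
  have hssub : (H.deleteEdges {s(u, v)}).edgeSet ⊂ H.edgeSet := by
    rw [Set.ssubset_iff_of_subset (edgeSet_mono hDle)]
    refine ⟨s(u, v), huv, ?_⟩
    rw [mem_edgeSet]
    exact PoCAux.not_adj_del
  have hlt : (H.deleteEdges {s(u, v)}).edgeSet.ncard < H.edgeSet.ncard :=
    Set.ncard_lt_ncard hssub hfin
  have hle : H.edgeSet.ncard ≤ (H.deleteEdges {s(u, v)}).edgeSet.ncard := by
    apply Set.ncard_le_ncard_of_injOn (Sym2.map φ)
    · intro s
      refine Sym2.ind (fun a b hs => ?_) s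
      rw [Sym2.map_pair_eq, mem_edgeSet]
      exact hHD a b hs
    · exact (Sym2.map.injective hφinj).injOn
  omega
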